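/- arXiv:2407.06777 — 2 statements merged into one kernel-verified Lean document; each statement's English description precedes it below -/
import Mathlib

section
/- For every integer k ≥ 1 there exists a function f_k : ℕ → ℕ such that every k-uniform hypergraph H = (V, E) has, for every integer ℓ ≥ 1, an ℓ-kernel K ⊆ V with |K| ≤ f_k(ℓ). -/
section Defs

variable {α : Type*} [DecidableEq α]

/-- `S` is an `ℓ`-sunflower of the edge set `E` with center `C`: a tuple of `ℓ` edges
(repetitions allowed) all containing `C` and pairwise intersecting exactly in `C`. -/
def IsSunflower (E : Set (Finset α)) (ℓ : ℕ) (C : Finset α) (S : Fin ℓ → Finset α) : Prop :=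
  (∀ i, S i ∈ E) ∧ (∀ i, C ⊆ S i) ∧ ∀ i j, i ≠ j → S i ∩ S j = C

/-- The `ℓ`-sunflower `S` with center `C` is outside `Y`: all its petals `S i \ C` are
disjoint from `Y`. -/
def IsSunflowerOutside (E : Set (Finset α)) (ℓ : ℕ) (Y C : Finset α)
    (S : Fin ℓ → Finset α) : Prop :=
  IsSunflower E ℓ C S ∧ ∀ i, Disjoint (S i \ C) Y

/-- `C` is the center of some `ℓ`-sunflower of `E` outside `Y`. -/
def IsCenterOutside (E : Set (Finset α)) (ℓ : ℕ) (Y C : Finset α) : Prop :=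
  ∃ S, IsSunflowerOutside E ℓ Y C S

/-- `K` is an `ℓ`-kernel of the hypergraph `(V, E)`: `K ⊆ V` and every edge `e ∈ E` contains a
set `C ⊆ e ∩ K` which is the center of an `ℓ`-sunflower of `E` outside `K`. -/
def IsKernel (V : Finset α) (E : Set (Finset α)) (ℓ : ℕ) (K : Finset α) : Prop :=
  K ⊆ V ∧ ∀ e ∈ E, ∃ C, C ⊆ e ∩ K ∧ IsCenterOutside E ℓ K C

end Defs

/- ---------------------------------------------------------------------------
Auxiliary development.

Plan of the proof:

1. `robust_kernel`: for every set system `E` of sets of size at most `k` (over an arbitrary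
   vertex type) there is a *finite* set `K` such that for *every* finite set `Z` and every edge
   `e ∈ E` there is a center `C ⊆ e ∩ K` carrying an `ℓ`-sunflower of `E` whose petals avoid
   `K ∪ Z`.  (Induction on `k`; the key dichotomy is whether `E` contains arbitrarily large
   matchings.)  In particular (taking `Z = ∅`) every hypergraph has a finite `ℓ`-kernel.

2. A compactness argument (a hand-rolled ultraproduct over a nonprincipal ultrafilter on `ℕ`)
   upgrades this to a *uniform* bound depending only on `k` and `ℓ`: if there were
   counterexample hypergraphs `H_b` requiring kernels of size `> b` for every `b`, then the
   ultraproduct of the `H_b` would be a hypergraph with sets of size at most `k` whose finite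
   kernels (which exist by step 1) would push down to small kernels of almost all `H_b`,
   a contradiction.
--------------------------------------------------------------------------- -/

open Finset

section Robust

variable {β : Type*} [DecidableEq β]

/-- Enumerate a finset of known cardinality by `Fin k`. -/
lemma exists_enum {γ : Type*} [DecidableEq γ] {e : Finset γ} {k : ℕ} (h : e.card = k) :
    ∃ x : Fin k → γ, Function.Injective x ∧ Finset.image x Finset.univ = e := by
  obtain ⟨l, hnodup, hl⟩ : ∃ l : List γ, l.Nodup ∧ l.toFinset = e :=
    ⟨e.toList, e.nodup_toList, e.toList_toFinset⟩
  have hlen : l.length = k := by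
    rw [← h, ← hl, List.toFinset_card_of_nodup hnodup]
  refine ⟨fun i => l.get (Fin.cast hlen.symm i), ?_, ?_⟩
  · intro i j hij
    have := (List.nodup_iff_injective_get).mp hnodup hij
    simpa [Fin.ext_iff] using this
  · ext a
    simp only [Finset.mem_image, Finset.mem_univ, true_and]
    rw [← hl, List.mem_toFinset]
    constructor
    · rintro ⟨i, rfl⟩; exact l.get_mem _
    · intro ha
      obtain ⟨i, hi⟩ := List.get_of_mem ha
      exact ⟨Fin.cast hlen i, by simpa using hi⟩

/-- A matching in a set system: a finite set of pairwise disjoint edges. -/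
def IsMatching (E : Set (Finset β)) (M : Finset (Finset β)) : Prop :=
  ↑M ⊆ E ∧ ∀ s ∈ M, ∀ t ∈ M, s ≠ t → Disjoint s t

/-- **Robust kernels.**  Every set system of sets of size `≤ k` admits a finite set `K` such
that every edge has a center `C ⊆ e ∩ K` carrying an `ℓ`-sunflower whose petals avoid `K`
and any prescribed finite set `Z`. -/
theorem robust_kernel (ℓ : ℕ) :
    ∀ (k : ℕ) (E : Set (Finset β)), (∀ e ∈ E, e.card ≤ k) →
    ∃ K : Finset β, ∀ Z : Finset β, ∀ e ∈ E, ∃ C, C ⊆ e ∩ K ∧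
      ∃ S : Fin ℓ → Finset β, (∀ i, S i ∈ E) ∧ (∀ i, C ⊆ S i) ∧
        (∀ i j, i ≠ j → S i ∩ S j = C) ∧ ∀ i, Disjoint (S i \ C) (K ∪ Z) := by
  intro k
  induction k with
  | zero =>
    intro E hE
    refine ⟨∅, fun Z e he => ?_⟩
    have he0 : e = ∅ := card_eq_zero.mp (Nat.le_zero.mp (hE e he))
    subst he0
    exact ⟨∅, by simp, fun _ => ∅, fun _ => he, fun _ => by simp, fun _ _ _ => by simp,
      fun _ => by simp⟩
  | succ k IH =>
    intro E hE
    classical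
    by_cases hbig : ∀ n : ℕ, ∃ M : Finset (Finset β), IsMatching E M ∧ n ≤ M.card
    · -- Case A : arbitrarily large matchings; K = ∅ works.
      refine ⟨∅, fun Z e he => ⟨∅, by simp, ?_⟩⟩
      obtain ⟨M, ⟨hME, hMd⟩, hMc⟩ := hbig (ℓ + Z.card)
      set bad := M.filter (fun s => ¬ Disjoint s Z) with hbaddef
      have hbadcard : bad.card ≤ Z.card := by
        have hpd : (bad : Set (Finset β)).PairwiseDisjoint (fun s => s ∩ Z) := by
          intro s hs t ht hst
          exact Disjoint.mono inter_subset_left inter_subset_left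
            (hMd s (mem_filter.mp hs).1 t (mem_filter.mp ht).1 hst)
        calc bad.card = ∑ _s ∈ bad, 1 := by simp
          _ ≤ ∑ s ∈ bad, (s ∩ Z).card := by
              refine Finset.sum_le_sum ?_
              intro s hs
              have := (mem_filter.mp hs).2
              rw [Finset.not_disjoint_iff] at this
              obtain ⟨v, hv1, hv2⟩ := this
              exact Finset.card_pos.mpr ⟨v, mem_inter.mpr ⟨hv1, hv2⟩⟩
          _ = (bad.biUnion (fun s => s ∩ Z)).card := (Finset.card_biUnion hpd).symm
          _ ≤ Z.card := by
              refine Finset.card_le_card ?_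
              intro v hv
              simp only [mem_biUnion] at hv
              obtain ⟨s, _, hvs⟩ := hv
              exact (mem_inter.mp hvs).2
      set good := M.filter (fun s => Disjoint s Z) with hgooddef
      have hgoodcard : ℓ ≤ good.card := by
        have : M.card = good.card + bad.card := by
          rw [hgooddef, hbaddef]
          exact (Finset.card_filter_add_card_filter_not (fun s => Disjoint s Z)).symm
        omega
      obtain ⟨M'', hM''sub, hM''card⟩ := Finset.exists_subset_card_eq hgoodcard
      obtain ⟨σ, hσinj, hσimg⟩ := exists_enum hM''card
      refine ⟨σ, ?_, fun _ => empty_subset _, ?_, ?_⟩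
      · intro i
        have : σ i ∈ M'' := by rw [← hσimg]; exact mem_image_of_mem σ (mem_univ i)
        exact hME (mem_filter.mp (hM''sub this)).1
      · intro i j hij
        have hi : σ i ∈ M'' := by rw [← hσimg]; exact mem_image_of_mem σ (mem_univ i)
        have hj : σ j ∈ M'' := by rw [← hσimg]; exact mem_image_of_mem σ (mem_univ j)
        have hd : Disjoint (σ i) (σ j) :=
          hMd _ (mem_filter.mp (hM''sub hi)).1 _ (mem_filter.mp (hM''sub hj)).1
            (fun h => hij (hσinj h))
        rwa [Finset.disjoint_iff_inter_eq_empty] at hd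
      · intro i
        have hi : σ i ∈ M'' := by rw [← hσimg]; exact mem_image_of_mem σ (mem_univ i)
        have : Disjoint (σ i) Z := (mem_filter.mp (hM''sub hi)).2
        simpa using this
    · -- Case B : matchings bounded; take a maximum matching, with union U.
      push_neg at hbig
      obtain ⟨n₀, hn₀⟩ := hbig
      set Cards : Set ℕ := {c | ∃ M : Finset (Finset β), IsMatching E M ∧ M.card = c}
        with hCards
      have h0 : (0 : ℕ) ∈ Cards := ⟨∅, ⟨by simp, by simp⟩, by simp⟩
      have hbdd : BddAbove Cards := by
        refine ⟨n₀, ?_⟩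
        rintro c ⟨M, hM, rfl⟩
        exact le_of_lt (hn₀ M hM)
      have hmax : sSup Cards ∈ Cards := Nat.sSup_mem ⟨0, h0⟩ hbdd
      obtain ⟨M, hM, hMcard⟩ := hmax
      set U := M.biUnion id with hU
      -- every nonempty edge meets U
      have hcov : ∀ f ∈ E, f ≠ ∅ → (f ∩ U).Nonempty := by
        intro f hf hf0
        rw [Finset.nonempty_iff_ne_empty]
        intro hfU
        have hfM : f ∉ M := by
          intro hfM
          have hsub : f ⊆ U := Finset.subset_biUnion_of_mem id hfM
          have : f ∩ U = f := Finset.inter_eq_left.mpr hsub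
          exact hf0 (by rw [← this, hfU])
        have hdfg : ∀ g ∈ M, Disjoint f g := by
          intro g hg
          have hgU : g ⊆ U := Finset.subset_biUnion_of_mem id hg
          rw [Finset.disjoint_left]
          intro a haf hag
          have : a ∈ f ∩ U := mem_inter.mpr ⟨haf, hgU hag⟩
          rw [hfU] at this
          exact absurd this (Finset.notMem_empty a)
        have hM' : IsMatching E (insert f M) := by
          constructor
          · rw [Finset.coe_insert]
            exact Set.insert_subset hf hM.1
          · intro s hs t ht hst
            rcases Finset.mem_insert.mp hs with rfl | hs'
            · rcases Finset.mem_insert.mp ht with rfl | ht'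
              · exact absurd rfl hst
              · exact hdfg t ht'
            · rcases Finset.mem_insert.mp ht with rfl | ht'
              · exact (hdfg s hs').symm
              · exact hM.2 s hs' t ht' hst
        have : (insert f M).card ≤ sSup Cards := le_csSup hbdd ⟨_, hM', rfl⟩
        rw [Finset.card_insert_of_notMem hfM, hMcard] at this
        omega
      -- the trace classes over U
      set ET : Finset β → Set (Finset β) := fun T => {p | p ∩ U = ∅ ∧ T ∪ p ∈ E} with hET
      have hETcard : ∀ T : Finset β, T.Nonempty → T ⊆ U → ∀ p ∈ ET T, p.card ≤ k := by
        intro T hTne hTU p hp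
        obtain ⟨hpU, hpE⟩ := hp
        have hdisj : Disjoint T p := by
          rw [Finset.disjoint_iff_inter_eq_empty, Finset.inter_comm, ← Finset.subset_empty,
            ← hpU]
          exact fun v hv => mem_inter.mpr ⟨(mem_inter.mp hv).1, hTU (mem_inter.mp hv).2⟩
        have hcards : T.card + p.card ≤ k + 1 := by
          rw [← Finset.card_union_of_disjoint hdisj]
          exact hE _ hpE
        have : 1 ≤ T.card := Finset.card_pos.mpr hTne
        omega
      -- recursive kernels for the classes
      have IHspec : ∀ T : Finset β, ∃ KT : Finset β, T.Nonempty → T ⊆ U →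
          ∀ Z : Finset β, ∀ p ∈ ET T, ∃ C, C ⊆ p ∩ KT ∧
            ∃ S : Fin ℓ → Finset β, (∀ i, S i ∈ ET T) ∧ (∀ i, C ⊆ S i) ∧
              (∀ i j, i ≠ j → S i ∩ S j = C) ∧ ∀ i, Disjoint (S i \ C) (KT ∪ Z) := by
        intro T
        by_cases h : T.Nonempty ∧ T ⊆ U
        · obtain ⟨KT, hKT⟩ := IH (ET T) (hETcard T h.1 h.2)
          exact ⟨KT, fun _ _ => hKT⟩
        · exact ⟨∅, fun h1 h2 => absurd ⟨h1, h2⟩ h⟩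
      choose KT hKT using IHspec
      refine ⟨U ∪ U.powerset.biUnion KT, fun Z e he => ?_⟩
      by_cases he0 : e = ∅
      · subst he0
        exact ⟨∅, by simp, fun _ => ∅, fun _ => he, fun _ => by simp, fun _ _ _ => by simp,
          fun _ => by simp⟩
      · set T := e ∩ U with hT
        have hTne : T.Nonempty := hcov e he he0
        have hTU : T ⊆ U := inter_subset_right
        set p := e \ U with hp
        have hpT : p ∈ ET T := by
          constructor
          · exact Finset.sdiff_inter_self U e
          · have : T ∪ p = e := by
              rw [hT, hp]
              ext a; simp only [mem_union, mem_inter, mem_sdiff]; tauto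
            rw [this]; exact he
        obtain ⟨C', hC'sub, S', hS'E, hS'C, hS'int, hS'disj⟩ :=
          hKT T hTne hTU ((U ∪ U.powerset.biUnion KT) ∪ Z) p hpT
        have hKTsub : KT T ⊆ U ∪ U.powerset.biUnion KT :=
          (Finset.subset_biUnion_of_mem KT (Finset.mem_powerset.mpr hTU)).trans
            Finset.subset_union_right
        refine ⟨T ∪ C', ?_, fun i => T ∪ S' i, ?_, ?_, ?_, ?_⟩
        · intro a ha
          rcases mem_union.mp ha with ha | ha
          · exact mem_inter.mpr ⟨(mem_inter.mp ha).1,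
              mem_union_left _ ((mem_inter.mp ha).2)⟩
          · have h1 : a ∈ p := (mem_inter.mp (hC'sub ha)).1
            have h2 : a ∈ KT T := (mem_inter.mp (hC'sub ha)).2
            exact mem_inter.mpr ⟨(mem_sdiff.mp h1).1, hKTsub h2⟩
        · intro i
          exact (hS'E i).2
        · intro i
          exact Finset.union_subset_union_right (hS'C i)
        · intro i j hij
          have key : (T ∪ S' i) ∩ (T ∪ S' j) = T ∪ (S' i ∩ S' j) :=
            (Finset.union_inter_distrib_left T (S' i) (S' j)).symm
          rw [key, hS'int i j hij]
        · intro i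
          have hsub : (T ∪ S' i) \ (T ∪ C') ⊆ S' i \ C' := by
            intro a ha
            rw [mem_sdiff] at ha ⊢
            obtain ⟨ha1, ha2⟩ := ha
            rcases mem_union.mp ha1 with h | h
            · exact absurd (mem_union_left _ h) ha2
            · exact ⟨h, fun hc => ha2 (mem_union_right _ hc)⟩
          exact Disjoint.mono hsub Finset.subset_union_right (hS'disj i)

end Robust

section Ultra

open Filter

universe u

/-- The almost-everywhere-equality setoid on sections of a family of types,
relative to an ultrafilter. -/
def aes (U : Ultrafilter ℕ) (A : ℕ → Type u) : Setoid (∀ b, A b) :=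
  ⟨fun x y => ∀ᶠ b in ↑U, x b = y b,
   ⟨fun _ => Filter.Eventually.of_forall (fun _ => rfl),
    fun h => h.mono (fun _ hb => hb.symm),
    fun h1 h2 => (h1.and h2).mono (fun _ hb => hb.1.trans hb.2)⟩⟩

/-- Pigeonhole for ultrafilters: an eventual existential over a finite type can be
uniformized. -/
lemma ultra_pigeon {γ : Type*} [Finite γ] (U : Ultrafilter ℕ) {P : γ → ℕ → Prop}
    (h : ∀ᶠ b in ↑U, ∃ g, P g b) : ∃ g, ∀ᶠ b in ↑U, P g b := by
  by_contra hc
  push_neg at hc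
  have h2 : ∀ᶠ b in ↑U, ∀ g, ¬ P g b :=
    Filter.eventually_all.mpr (fun g => hc g)
  obtain ⟨b, ⟨g, hg⟩, hng⟩ := (h.and h2).exists
  exact hng g hg

/-- **Uniform bound for kernels**, by compactness.  For every `k` and `ℓ` there is a single
bound `b` such that every `k`-uniform hypergraph (in universe `u`) has an `ℓ`-kernel of size
at most `b`. -/
theorem uniform_bound (k ℓ : ℕ) (hk : 1 ≤ k) :
    ∃ b : ℕ, ∀ (α : Type u) (instα : DecidableEq α) (V : Finset α) (E : Set (Finset α)),
      (∀ e ∈ E, e ⊆ V) → (∀ e ∈ E, e.card = k) →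
      ∃ K : Finset α, @IsKernel α instα V E ℓ K ∧ K.card ≤ b := by
  by_contra hcon
  push_neg at hcon
  choose A inst V E hEV hcard bad using hcon
  letI : ∀ b, DecidableEq (A b) := inst
  -- every counterexample hypergraph has an edge
  have hne : ∀ b, (E b).Nonempty := by
    intro b
    rw [Set.nonempty_iff_ne_empty]
    intro h0
    have hker : @IsKernel _ (inst b) (V b) (E b) ℓ ∅ :=
      ⟨Finset.empty_subset _, fun e he => absurd he (by simp [h0])⟩
    have := bad b ∅ hker
    simp at this
  set U : Ultrafilter ℕ := hyperfilter ℕ with hUdef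
  letI sA : Setoid (∀ b, A b) := aes U A
  let β : Type u := Quotient sA
  letI : DecidableEq β := Classical.decEq β
  -- the ultraproduct set system
  set Estar : Set (Finset β) :=
    {Aq | ∃ x : Fin k → ∀ b, A b,
      (∀ᶠ b in ↑U, Finset.image (fun i => x i b) Finset.univ ∈ E b) ∧
      Aq = Finset.image (fun i => (⟦x i⟧ : β)) Finset.univ} with hEstar
  have hEstarcard : ∀ Aq ∈ Estar, Aq.card ≤ k := by
    rintro Aq ⟨x, _, rfl⟩
    exact (Finset.card_image_le).trans (by simp)
  obtain ⟨Kstar, hKstar⟩ := robust_kernel ℓ k Estar hEstarcard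
  set m := Kstar.card with hm
  obtain ⟨κ, hκinj, hκimg⟩ := exists_enum (rfl : Kstar.card = m)
  set w : Fin m → ∀ b, A b := fun s => (κ s).out with hwdef
  have hw : ∀ s, (⟦w s⟧ : β) = κ s := fun s => Quotient.out_eq (κ s)
  set Kb : ∀ b, Finset (A b) :=
    fun b => (Finset.image (fun s => w s b) Finset.univ) ∩ V b with hKbdef
  -- almost all the `K b` are kernels
  have hker : ∀ᶠ b in ↑U, @IsKernel _ (inst b) (V b) (E b) ℓ (Kb b) := by
    by_contra hbad
    rw [← Ultrafilter.eventually_not] at hbad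
    have hviol : ∀ᶠ b in ↑U, ∃ e, e ∈ E b ∧ ∀ C, C ⊆ e ∩ Kb b →
        ¬ @IsCenterOutside _ (inst b) (E b) ℓ (Kb b) C := by
      refine hbad.mono (fun b hb => ?_)
      have hsub : Kb b ⊆ V b := Finset.inter_subset_right
      have hb' : ¬ ∀ e ∈ E b, ∃ C, C ⊆ e ∩ Kb b ∧
          @IsCenterOutside _ (inst b) (E b) ℓ (Kb b) C := fun h => hb ⟨hsub, h⟩
      push_neg at hb'
      obtain ⟨e, he, hall⟩ := hb'
      exact ⟨e, he, hall⟩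
    -- choose a violating edge (or any edge) in each coordinate
    have hchoice : ∀ b, ∃ eb : Finset (A b), eb ∈ E b ∧
        ((∃ e, e ∈ E b ∧ ∀ C, C ⊆ e ∩ Kb b →
          ¬ @IsCenterOutside _ (inst b) (E b) ℓ (Kb b) C) →
         (∀ C, C ⊆ eb ∩ Kb b → ¬ @IsCenterOutside _ (inst b) (E b) ℓ (Kb b) C)) := by
      intro b
      by_cases h : ∃ e, e ∈ E b ∧ ∀ C, C ⊆ e ∩ Kb b →
          ¬ @IsCenterOutside _ (inst b) (E b) ℓ (Kb b) C
      · exact ⟨h.choose, h.choose_spec.1, fun _ => h.choose_spec.2⟩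
      · exact ⟨(hne b).choose, (hne b).choose_spec, fun hcon2 => absurd hcon2 h⟩
    choose ed hedE hedviol using hchoice
    have hviol' : ∀ᶠ b in ↑U, ∀ C, C ⊆ ed b ∩ Kb b →
        ¬ @IsCenterOutside _ (inst b) (E b) ℓ (Kb b) C :=
      hviol.mono (fun b hb => hedviol b hb)
    -- enumerate the chosen edges
    have hcardk : ∀ b, (ed b).card = k := fun b => hcard b _ (hedE b)
    have hexf : ∀ b, ∃ xf : Fin k → A b, Function.Injective xf ∧
        Finset.image xf Finset.univ = ed b := fun b => exists_enum (hcardk b)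
    choose xf hxinj hximg using hexf
    set x : Fin k → ∀ b, A b := fun i b => xf b i with hxdef
    have hxe : ∀ i b, x i b ∈ ed b := fun i b => by
      rw [← hximg b]; exact Finset.mem_image_of_mem _ (Finset.mem_univ i)
    set estar : Finset β := Finset.image (fun i => (⟦x i⟧ : β)) Finset.univ with hestardef
    have hestar : estar ∈ Estar := by
      refine ⟨x, ?_, rfl⟩
      refine Filter.Eventually.of_forall (fun b => ?_)
      have : Finset.image (fun i => x i b) Finset.univ = ed b := hximg b
      rw [this]; exact hedE b
    obtain ⟨C, hCsub, S, hSE, hSC, hSint, hSdisj0⟩ := hKstar ∅ estar hestar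
    have hSdisj : ∀ i, Disjoint (S i \ C) Kstar := fun i => by
      have := hSdisj0 i; simpa using this
    -- the index set of C inside the enumeration of estar
    set I : Finset (Fin k) := Finset.univ.filter (fun i => (⟦x i⟧ : β) ∈ C) with hIdef
    have hCeq : C = Finset.image (fun i => (⟦x i⟧ : β)) I := by
      ext c
      constructor
      · intro hc
        have hce : c ∈ estar := (Finset.mem_inter.mp (hCsub hc)).1
        obtain ⟨i, _, rfl⟩ := Finset.mem_image.mp hce
        exact Finset.mem_image.mpr ⟨i, Finset.mem_filter.mpr ⟨Finset.mem_univ i, hc⟩, rfl⟩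
      · intro hc
        obtain ⟨i, hi, rfl⟩ := Finset.mem_image.mp hc
        exact (Finset.mem_filter.mp hi).2
    set Cb : ∀ b, Finset (A b) := fun b => Finset.image (fun i => x i b) I with hCbdef
    -- representatives for the sunflower petals
    have hSrep : ∀ i : Fin ℓ, ∃ y : Fin k → ∀ b, A b,
        (∀ᶠ b in ↑U, Finset.image (fun j => y j b) Finset.univ ∈ E b) ∧
        S i = Finset.image (fun j => (⟦y j⟧ : β)) Finset.univ := fun i => hSE i
    choose y hyE hyS using hSrep
    set Sb : Fin ℓ → ∀ b, Finset (A b) :=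
      fun i b => Finset.image (fun j => y i j b) Finset.univ with hSbdef
    -- (F1) the projected petals are edges
    have hSbE : ∀ᶠ b in ↑U, ∀ i, Sb i b ∈ E b :=
      Filter.eventually_all.mpr (fun i => hyE i)
    -- (F2) the projected center is inside K b
    have hCbK : ∀ᶠ b in ↑U, ∀ i ∈ I, x i b ∈ Kb b := by
      rw [Filter.eventually_all_finset I]
      intro i hi
      have hcK : (⟦x i⟧ : β) ∈ Kstar := (Finset.mem_inter.mp (hCsub (Finset.mem_filter.mp hi).2)).2
      rw [← hκimg] at hcK
      obtain ⟨s, _, hs⟩ := Finset.mem_image.mp hcK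
      have heq : (⟦w s⟧ : β) = ⟦x i⟧ := by rw [hw s, hs]
      have hae : ∀ᶠ b in ↑U, w s b = x i b := Quotient.exact heq
      refine hae.mono (fun b hb => ?_)
      refine Finset.mem_inter.mpr ⟨?_, hEV b _ (hedE b) (hxe i b)⟩
      rw [← hb]
      exact Finset.mem_image_of_mem _ (Finset.mem_univ s)
    -- (F3) the projected center is inside each projected petal edge
    have hCbS : ∀ᶠ b in ↑U, ∀ i : Fin ℓ, ∀ i0 ∈ I, x i0 b ∈ Sb i b := by
      rw [Filter.eventually_all]
      intro i
      rw [Filter.eventually_all_finset I]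
      intro i0 hi0
      have hc : (⟦x i0⟧ : β) ∈ S i := hSC i (Finset.mem_filter.mp hi0).2
      rw [hyS i] at hc
      obtain ⟨j0, _, hj0⟩ := Finset.mem_image.mp hc
      have hae : ∀ᶠ b in ↑U, y i j0 b = x i0 b := Quotient.exact hj0
      refine hae.mono (fun b hb => ?_)
      rw [← hb]
      exact Finset.mem_image_of_mem _ (Finset.mem_univ j0)
    -- (F4) pairwise intersections are contained in the projected center
    have hint_sub : ∀ i j : Fin ℓ, i ≠ j → ∀ᶠ b in ↑U, Sb i b ∩ Sb j b ⊆ Cb b := by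
      intro i j hij
      by_contra hcon2
      rw [← Ultrafilter.eventually_not] at hcon2
      have hv : ∀ b, ∃ v : A b, ¬(Sb i b ∩ Sb j b ⊆ Cb b) →
          (v ∈ Sb i b ∧ v ∈ Sb j b ∧ v ∉ Cb b) := by
        intro b
        by_cases hb : Sb i b ∩ Sb j b ⊆ Cb b
        · exact ⟨x ⟨0, hk⟩ b, fun hcon3 => absurd hb hcon3⟩
        · obtain ⟨v, hv1, hv2⟩ := Finset.not_subset.mp hb
          exact ⟨v, fun _ => ⟨(Finset.mem_inter.mp hv1).1, (Finset.mem_inter.mp hv1).2, hv2⟩⟩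
      choose v hvspec using hv
      have hvev : ∀ᶠ b in ↑U, v b ∈ Sb i b ∧ v b ∈ Sb j b ∧ v b ∉ Cb b :=
        hcon2.mono (fun b hb => hvspec b hb)
      have hex : ∀ᶠ b in ↑U, ∃ g : Fin k × Fin k,
          v b = y i g.1 b ∧ v b = y j g.2 b ∧ v b ∉ Cb b := by
        refine hvev.mono (fun b hb => ?_)
        obtain ⟨j1, _, hj1⟩ := Finset.mem_image.mp hb.1
        obtain ⟨j2, _, hj2⟩ := Finset.mem_image.mp hb.2.1
        exact ⟨(j1, j2), hj1.symm, hj2.symm, hb.2.2⟩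
      obtain ⟨⟨j1, j2⟩, hg⟩ := ultra_pigeon U hex
      have h1 : (⟦v⟧ : β) = ⟦y i j1⟧ := Quotient.sound (hg.mono (fun b hb => hb.1))
      have h2 : (⟦v⟧ : β) = ⟦y j j2⟧ := Quotient.sound (hg.mono (fun b hb => hb.2.1))
      have hvSi : (⟦v⟧ : β) ∈ S i := by
        rw [hyS i, h1]; exact Finset.mem_image_of_mem _ (Finset.mem_univ j1)
      have hvSj : (⟦v⟧ : β) ∈ S j := by
        rw [hyS j, h2]; exact Finset.mem_image_of_mem _ (Finset.mem_univ j2)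
      have hvC : (⟦v⟧ : β) ∈ C := by
        rw [← hSint i j hij]; exact Finset.mem_inter.mpr ⟨hvSi, hvSj⟩
      rw [hCeq] at hvC
      obtain ⟨i0, hi0, hi0eq⟩ := Finset.mem_image.mp hvC
      have hae : ∀ᶠ b in ↑U, x i0 b = v b := Quotient.exact hi0eq
      obtain ⟨b, hb1, hb2⟩ := (hae.and hg).exists
      exact hb2.2.2 (by rw [← hb1]; exact Finset.mem_image_of_mem _ hi0)
    have hint_ev : ∀ᶠ b in ↑U, ∀ i j : Fin ℓ, i ≠ j → Sb i b ∩ Sb j b ⊆ Cb b := by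
      rw [Filter.eventually_all]
      intro i
      rw [Filter.eventually_all]
      intro j
      by_cases hij : i = j
      · exact Filter.Eventually.of_forall (fun b h => absurd hij h)
      · exact (hint_sub i j hij).mono (fun b hb _ => hb)
    -- (F5) petals avoid K b
    have hdisj_ev : ∀ᶠ b in ↑U, ∀ i : Fin ℓ, Disjoint (Sb i b \ Cb b) (Kb b) := by
      rw [Filter.eventually_all]
      intro i
      by_contra hcon2
      rw [← Ultrafilter.eventually_not] at hcon2
      have hv : ∀ b, ∃ v : A b, ¬ Disjoint (Sb i b \ Cb b) (Kb b) →
          (v ∈ Sb i b ∧ v ∉ Cb b ∧ v ∈ Kb b) := by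
        intro b
        by_cases hb : Disjoint (Sb i b \ Cb b) (Kb b)
        · exact ⟨x ⟨0, hk⟩ b, fun h => absurd hb h⟩
        · rw [Finset.not_disjoint_iff] at hb
          obtain ⟨v, hv1, hv2⟩ := hb
          exact ⟨v, fun _ => ⟨(Finset.mem_sdiff.mp hv1).1, (Finset.mem_sdiff.mp hv1).2, hv2⟩⟩
      choose v hvspec using hv
      have hvev : ∀ᶠ b in ↑U, v b ∈ Sb i b ∧ v b ∉ Cb b ∧ v b ∈ Kb b :=
        hcon2.mono (fun b hb => hvspec b hb)
      have hex : ∀ᶠ b in ↑U, ∃ g : Fin k × Fin m,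
          v b = y i g.1 b ∧ v b = w g.2 b ∧ v b ∉ Cb b := by
        refine hvev.mono (fun b hb => ?_)
        obtain ⟨j1, _, hj1⟩ := Finset.mem_image.mp hb.1
        obtain ⟨s, _, hs⟩ := Finset.mem_image.mp (Finset.mem_inter.mp hb.2.2).1
        exact ⟨(j1, s), hj1.symm, hs.symm, hb.2.1⟩
      obtain ⟨⟨j1, s⟩, hg⟩ := ultra_pigeon U hex
      have h1 : (⟦v⟧ : β) = ⟦y i j1⟧ := Quotient.sound (hg.mono (fun b hb => hb.1))
      have h2 : (⟦v⟧ : β) = ⟦w s⟧ := Quotient.sound (hg.mono (fun b hb => hb.2.1))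
      have hvSi : (⟦v⟧ : β) ∈ S i := by
        rw [hyS i, h1]; exact Finset.mem_image_of_mem _ (Finset.mem_univ j1)
      have hvK : (⟦v⟧ : β) ∈ Kstar := by
        rw [h2, hw s, ← hκimg]
        exact Finset.mem_image_of_mem _ (Finset.mem_univ s)
      have hvC : (⟦v⟧ : β) ∈ C := by
        by_contra hnc
        exact (Finset.disjoint_left.mp (hSdisj i)) (Finset.mem_sdiff.mpr ⟨hvSi, hnc⟩) hvK
      rw [hCeq] at hvC
      obtain ⟨i0, hi0, hi0eq⟩ := Finset.mem_image.mp hvC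
      have hae : ∀ᶠ b in ↑U, x i0 b = v b := Quotient.exact hi0eq
      obtain ⟨b, hb1, hb2⟩ := (hae.and hg).exists
      exact hb2.2.2 (by rw [← hb1]; exact Finset.mem_image_of_mem _ hi0)
    -- assemble and contradict the choice of violating edges
    obtain ⟨b, hb1, hb2, hb3, hb4, hb5, hb6⟩ :=
      (hCbK.and (hCbS.and (hSbE.and (hint_ev.and (hdisj_ev.and hviol'))))).exists
    refine hb6 (Cb b) ?_ ?_
    · intro a ha
      obtain ⟨i, hi, rfl⟩ := Finset.mem_image.mp ha
      exact Finset.mem_inter.mpr ⟨hxe i b, hb1 i hi⟩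
    · refine ⟨fun i => Sb i b, ⟨⟨fun i => hb3 i, ?_, ?_⟩, fun i => hb5 i⟩⟩
      · intro i
        intro a ha
        obtain ⟨i0, hi0, rfl⟩ := Finset.mem_image.mp ha
        exact hb2 i i0 hi0
      · intro i j hij
        refine Finset.Subset.antisymm (hb4 i j hij) ?_
        intro a ha
        refine Finset.mem_inter.mpr ⟨?_, ?_⟩
        · obtain ⟨i0, hi0, rfl⟩ := Finset.mem_image.mp ha
          exact hb2 i i0 hi0
        · obtain ⟨i0, hi0, rfl⟩ := Finset.mem_image.mp ha
          exact hb2 j i0 hi0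
  -- finish: almost all b also satisfy m ≤ b, contradiction with minimality
  have hent : ∀ᶠ b in ↑U, m ≤ b := by
    have hco : ∀ᶠ b in (Filter.cofinite : Filter ℕ), m ≤ b := by
      rw [Filter.eventually_cofinite]
      have : {b : ℕ | ¬ m ≤ b} = {b | b < m} := by ext b; simp
      rw [this]
      exact Set.finite_lt_nat m
    exact hco.filter_mono (hyperfilter_le_cofinite)
  obtain ⟨b, hbk, hbm⟩ := (hker.and hent).exists
  have hKbcard : (Kb b).card ≤ m := by
    refine le_trans (Finset.card_le_card Finset.inter_subset_left) ?_
    refine le_trans Finset.card_image_le ?_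
    simp
  have := bad b (Kb b) hbk
  omega

end Ultra

/-- For every `k ≥ 1` there is a function `f` such that every `k`-uniform hypergraph
`H = (V, E)` has, for every `ℓ ≥ 1`, an `ℓ`-kernel of size at most `f ℓ`. -/
theorem kernel_exists (k : ℕ) (hk : 1 ≤ k) :
    ∃ f : ℕ → ℕ, ∀ (α : Type u) [DecidableEq α] (V : Finset α) (E : Set (Finset α)),
      (∀ e ∈ E, e ⊆ V) → (∀ e ∈ E, e.card = k) → ∀ ℓ : ℕ, 1 ≤ ℓ →
        ∃ K : Finset α, IsKernel V E ℓ K ∧ K.card ≤ f ℓ := by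
  have h : ∀ ℓ : ℕ, ∃ b : ℕ, ∀ (α : Type u) (instα : DecidableEq α) (V : Finset α)
      (E : Set (Finset α)), (∀ e ∈ E, e ⊆ V) → (∀ e ∈ E, e.card = k) →
      ∃ K : Finset α, @IsKernel α instα V E ℓ K ∧ K.card ≤ b :=
    fun ℓ => uniform_bound k ℓ hk
  refine ⟨fun ℓ => (h ℓ).choose, ?_⟩
  intro α instα V E hEV hcard ℓ hℓ
  exact (h ℓ).choose_spec α instα V E hEV hcard
end

section
/- Let H = (V, E) be a k-uniform hypergraph and let K ⊆ V be a 2^k-kernel of H. Then Waiter has a winning strategy in the Waiter-Client game on H if and only if Waiter has a winning strategy in the Waiter-Client game on the trace hypergraph T_K(H) = (K, {e ∩ K : e ∈ E}). -/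
variable {α : Type*} [DecidableEq α]

lemma card_sdiff_pair_lt {U : Finset α} {x y : α} (hx : x ∈ U) :
    (U \ {x, y}).card < U.card :=
  lt_of_le_of_lt
    (Finset.card_le_card (by
      intro a ha
      simp only [Finset.mem_sdiff, Finset.mem_insert, Finset.mem_singleton,
        Finset.mem_erase] at ha ⊢
      tauto))
    (Finset.card_erase_lt_of_mem hx)

/-- Waiter-Client game played on the edge set `E`: Waiter has a winning strategy from the
position in which `U` is the set of unclaimed vertices and `W` is the set of vertices already
claimed by Waiter.  While at least two vertices are unclaimed, Waiter offers two distinct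
unclaimed vertices `x, y`; Client claims one of them and Waiter gets the other.  A last
remaining unclaimed vertex goes to Client.  Waiter wins if at the end her vertices contain an
edge of `E`. -/
def WCWaiterWins (E : Set (Finset α)) (U W : Finset α) : Prop :=
  if _h : 2 ≤ U.card then
    ∃ x, ∃ _hx : x ∈ U, ∃ y, ∃ _hy : y ∈ U, x ≠ y ∧
      WCWaiterWins E (U \ {x, y}) (insert x W) ∧ WCWaiterWins E (U \ {x, y}) (insert y W)
  else ∃ e ∈ E, e ⊆ W
termination_by U.card
decreasing_by all_goals exact card_sdiff_pair_lt (by assumption)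

lemma wc_win_of_done (E : Set (Finset α)) (U W : Finset α)
    (h : ∃ e ∈ E, e ⊆ W) : WCWaiterWins E U W := by
  rw [WCWaiterWins]
  split_ifs with h2
  · obtain ⟨x, hx, y, hy, hxy⟩ := Finset.one_lt_card.mp h2
    obtain ⟨e, he, hew⟩ := h
    exact ⟨x, hx, y, hy, hxy,
      wc_win_of_done E _ _ ⟨e, he, hew.trans (Finset.subset_insert _ _)⟩,
      wc_win_of_done E _ _ ⟨e, he, hew.trans (Finset.subset_insert _ _)⟩⟩
  · exact h
termination_by U.card
decreasing_by all_goals exact card_sdiff_pair_lt (by assumption)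

/-- Direction →: from a Waiter win on the full game, a Waiter win on the trace. -/
lemma wc_trace_of_win (E : Set (Finset α)) (K : Finset α) (U W U' W' : Finset α)
    (h : WCWaiterWins E U W) (hU : U ∩ K ⊆ U') (hW : W ∩ K ⊆ W') :
    WCWaiterWins {f | ∃ e ∈ E, f = e ∩ K} U' W' := by
  rw [WCWaiterWins] at h
  split_ifs at h with h2
  · obtain ⟨x, hx, y, hy, hxy, hwx, hwy⟩ := h
    by_cases hxK : x ∈ K
    · by_cases hyK : y ∈ K
      · have hxU' : x ∈ U' := hU (Finset.mem_inter.mpr ⟨hx, hxK⟩)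
        have hyU' : y ∈ U' := hU (Finset.mem_inter.mpr ⟨hy, hyK⟩)
        rw [WCWaiterWins, dif_pos (show 2 ≤ U'.card from Finset.one_lt_card.mpr ⟨x, hxU', y, hyU', hxy⟩)]
        have hUsub : (U \ {x, y}) ∩ K ⊆ U' \ {x, y} := by
          intro a ha
          rw [Finset.mem_inter, Finset.mem_sdiff] at ha
          rw [Finset.mem_sdiff]
          exact ⟨hU (Finset.mem_inter.mpr ⟨ha.1.1, ha.2⟩), ha.1.2⟩
        refine ⟨x, hxU', y, hyU', hxy, ?_, ?_⟩
        · refine wc_trace_of_win E K _ _ _ _ hwx hUsub ?_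
          intro a ha
          rw [Finset.mem_inter, Finset.mem_insert] at ha
          rcases ha.1 with rfl | haW
          · exact Finset.mem_insert_self _ _
          · exact Finset.mem_insert_of_mem (hW (Finset.mem_inter.mpr ⟨haW, ha.2⟩))
        · refine wc_trace_of_win E K _ _ _ _ hwy hUsub ?_
          intro a ha
          rw [Finset.mem_inter, Finset.mem_insert] at ha
          rcases ha.1 with rfl | haW
          · exact Finset.mem_insert_self _ _
          · exact Finset.mem_insert_of_mem (hW (Finset.mem_inter.mpr ⟨haW, ha.2⟩))
      · -- y ∉ K : Waiter takes y in the simulation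
        refine wc_trace_of_win E K _ _ _ _ hwy ?_ ?_
        · intro a ha
          rw [Finset.mem_inter, Finset.mem_sdiff] at ha
          exact hU (Finset.mem_inter.mpr ⟨ha.1.1, ha.2⟩)
        · intro a ha
          rw [Finset.mem_inter, Finset.mem_insert] at ha
          rcases ha.1 with rfl | haW
          · exact absurd ha.2 hyK
          · exact hW (Finset.mem_inter.mpr ⟨haW, ha.2⟩)
    · -- x ∉ K : Waiter takes x in the simulation
      refine wc_trace_of_win E K _ _ _ _ hwx ?_ ?_
      · intro a ha
        rw [Finset.mem_inter, Finset.mem_sdiff] at ha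
        exact hU (Finset.mem_inter.mpr ⟨ha.1.1, ha.2⟩)
      · intro a ha
        rw [Finset.mem_inter, Finset.mem_insert] at ha
        rcases ha.1 with rfl | haW
        · exact absurd ha.2 hxK
        · exact hW (Finset.mem_inter.mpr ⟨haW, ha.2⟩)
  · obtain ⟨e, he, hew⟩ := h
    refine wc_win_of_done _ U' W' ⟨e ∩ K, ⟨e, he, rfl⟩, ?_⟩
    intro a ha
    rw [Finset.mem_inter] at ha
    exact hW (Finset.mem_inter.mpr ⟨hew ha.1, ha.2⟩)
termination_by U.card
decreasing_by all_goals exact card_sdiff_pair_lt (by assumption)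

lemma geom_icc (s : ℕ) : ∑ c ∈ Finset.Icc 1 s, 2 ^ (s - c) = 2 ^ s - 1 := by
  induction s with
  | zero => simp
  | succ n ih =>
    have hins : Finset.Icc 1 (n + 1) = insert (n + 1) (Finset.Icc 1 n) := by
      ext c
      simp only [Finset.mem_Icc, Finset.mem_insert]
      omega
    rw [hins, Finset.sum_insert (by simp), Nat.sub_self, pow_zero]
    have h2 : ∑ c ∈ Finset.Icc 1 n, 2 ^ (n + 1 - c) = 2 * ∑ c ∈ Finset.Icc 1 n, 2 ^ (n - c) := by
      rw [Finset.mul_sum]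
      refine Finset.sum_congr rfl fun c hc => ?_
      have hc' := (Finset.mem_Icc.mp hc).2
      rw [show n + 1 - c = (n - c) + 1 by omega, pow_succ]
      ring
    rw [h2, ih]
    have hp : 1 ≤ 2 ^ n := Nat.one_le_two_pow
    have hp2 : (2:ℕ) ^ (n + 1) = 2 * 2 ^ n := by rw [pow_succ]; ring
    omega

lemma exists_eq_card (s : ℕ) (F : Finset (Finset α)) (h0 : ∅ ∉ F)
    (hcard : ∀ A ∈ F, A.card ≤ s) (hpot : 2 ^ s ≤ ∑ A ∈ F, 2 ^ (s - A.card)) :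
    ∃ A ∈ F, ∃ B ∈ F, A ≠ B ∧ A.card = B.card := by
  by_contra hcon
  push_neg at hcon
  have hinj : ∀ A ∈ F, ∀ B ∈ F, A.card = B.card → A = B := by
    intro A hA B hB h
    by_contra hne
    exact hcon A hA B hB hne h
  have h1 : ∑ A ∈ F, 2 ^ (s - A.card) = ∑ c ∈ F.image Finset.card, 2 ^ (s - c) :=
    (Finset.sum_image (f := fun c => 2 ^ (s - c)) fun A hA B hB h => hinj A hA B hB h).symm
  have h2 : F.image Finset.card ⊆ Finset.Icc 1 s := by
    intro c hc
    simp only [Finset.mem_image] at hc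
    obtain ⟨A, hA, rfl⟩ := hc
    have hne : A ≠ ∅ := fun h => h0 (h ▸ hA)
    rw [Finset.mem_Icc]
    exact ⟨Finset.card_pos.mpr (Finset.nonempty_iff_ne_empty.mpr hne), hcard A hA⟩
  have h3 : ∑ c ∈ F.image Finset.card, 2 ^ (s - c) ≤ ∑ c ∈ Finset.Icc 1 s, 2 ^ (s - c) :=
    Finset.sum_le_sum_of_subset h2
  rw [geom_icc] at h3
  have hp : 1 ≤ 2 ^ s := Nat.one_le_two_pow
  omega

/-- Waiter can complete one of pairwise disjoint "boxes" when the potential is at least `2^s`. -/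
lemma wc_win_boxes (E : Set (Finset α)) (s : ℕ) (U W : Finset α) (F : Finset (Finset α))
    (hsub : ∀ A ∈ F, A ⊆ U)
    (hdisj : ∀ A ∈ F, ∀ B ∈ F, A ≠ B → Disjoint A B)
    (hcard : ∀ A ∈ F, A.card ≤ s)
    (hpot : 2 ^ s ≤ ∑ A ∈ F, 2 ^ (s - A.card))
    (hedge : ∀ A ∈ F, ∃ e ∈ E, e ⊆ W ∪ A) : WCWaiterWins E U W := by
  by_cases h0 : ∅ ∈ F
  · obtain ⟨e, he, hew⟩ := hedge ∅ h0
    exact wc_win_of_done E U W ⟨e, he, by simpa using hew⟩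
  obtain ⟨A, hA, B, hB, hAB, hcAB⟩ := exists_eq_card s F h0 hcard hpot
  obtain ⟨x, hxA⟩ := Finset.nonempty_iff_ne_empty.mpr (fun h => h0 (h ▸ hA))
  obtain ⟨y, hyB⟩ := Finset.nonempty_iff_ne_empty.mpr (fun h => h0 (h ▸ hB))
  have hdAB := hdisj A hA B hB hAB
  have hxy : x ≠ y := fun h => (Finset.disjoint_left.mp hdAB hxA) (h ▸ hyB)
  have hxU : x ∈ U := hsub A hA hxA
  have hyU : y ∈ U := hsub B hB hyB
  have key : ∀ (A' B' : Finset α) (x' y' : α), A' ∈ F → B' ∈ F → A' ≠ B' →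
      A'.card = B'.card → x' ∈ A' → y' ∈ B' → x' ∈ U →
      WCWaiterWins E (U \ {x', y'}) (insert x' W) := by
    intro A' B' x' y' hA' hB' hAB' hcAB' hxA' hyB' hxU'
    have hdA'B' := hdisj A' hA' B' hB' hAB'
    -- membership facts for the erased family
    have hmemfacts : ∀ P ∈ (F.erase A').erase B', P ∈ F ∧ P ≠ A' ∧ P ≠ B' := by
      intro P hP
      exact ⟨Finset.mem_of_mem_erase (Finset.mem_of_mem_erase hP),
        Finset.ne_of_mem_erase (Finset.mem_of_mem_erase hP), Finset.ne_of_mem_erase hP⟩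
    refine wc_win_boxes E s (U \ {x', y'}) (insert x' W)
        (insert (A'.erase x') ((F.erase A').erase B')) ?_ ?_ ?_ ?_ ?_
    · -- subsets of the new unclaimed set
      intro P hP
      rcases Finset.mem_insert.mp hP with rfl | hP
      · intro a ha
        have haA : a ∈ A' := Finset.mem_of_mem_erase ha
        have hax : a ≠ x' := Finset.ne_of_mem_erase ha
        have hay : a ≠ y' := fun h => Finset.disjoint_left.mp hdA'B' haA (h ▸ hyB')
        rw [Finset.mem_sdiff]
        refine ⟨hsub A' hA' haA, ?_⟩
        simp only [Finset.mem_insert, Finset.mem_singleton]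
        tauto
      · obtain ⟨hPF, hPA, hPB⟩ := hmemfacts P hP
        intro a ha
        have hax : a ≠ x' := fun h =>
          Finset.disjoint_left.mp (hdisj P hPF A' hA' hPA) ha (h ▸ hxA')
        have hay : a ≠ y' := fun h =>
          Finset.disjoint_left.mp (hdisj P hPF B' hB' hPB) ha (h ▸ hyB')
        rw [Finset.mem_sdiff]
        refine ⟨hsub P hPF ha, ?_⟩
        simp only [Finset.mem_insert, Finset.mem_singleton]
        tauto
    · -- pairwise disjoint
      intro P hP Q hQ hPQ
      rcases Finset.mem_insert.mp hP with rfl | hP <;>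
        rcases Finset.mem_insert.mp hQ with rfl | hQ
      · exact absurd rfl hPQ
      · obtain ⟨hQF, hQA, _⟩ := hmemfacts Q hQ
        exact Disjoint.mono_left (Finset.erase_subset _ _)
          (hdisj A' hA' Q hQF (fun h => hQA h.symm))
      · obtain ⟨hPF, hPA, _⟩ := hmemfacts P hP
        exact Disjoint.mono_right (Finset.erase_subset _ _) (hdisj P hPF A' hA' hPA)
      · obtain ⟨hPF, _, _⟩ := hmemfacts P hP
        obtain ⟨hQF, _, _⟩ := hmemfacts Q hQ
        exact hdisj P hPF Q hQF hPQ
    · -- cards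
      intro P hP
      rcases Finset.mem_insert.mp hP with rfl | hP
      · exact le_trans (Finset.card_le_card (Finset.erase_subset _ _)) (hcard A' hA')
      · exact hcard P (hmemfacts P hP).1
    · -- potential
      have hBA : B' ∈ F.erase A' := Finset.mem_erase.mpr ⟨fun h => hAB' h.symm, hB'⟩
      have hnm : A'.erase x' ∉ (F.erase A').erase B' := by
        intro hmem
        obtain ⟨h1, h2, _⟩ := hmemfacts _ hmem
        have h3 := hdisj _ h1 A' hA' h2
        have h4 : A'.erase x' = ∅ := by
          rw [← Finset.subset_empty]
          intro a ha
          exact absurd (Finset.mem_of_mem_erase ha)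
            (Finset.disjoint_left.mp h3 ha)
        exact h0 (h4 ▸ h1)
      rw [Finset.sum_insert hnm]
      have ha1 : 1 ≤ A'.card := Finset.card_pos.mpr ⟨x', hxA'⟩
      have has : A'.card ≤ s := hcard A' hA'
      have hfx : (2:ℕ) ^ (s - (A'.erase x').card) = 2 * 2 ^ (s - A'.card) := by
        rw [Finset.card_erase_of_mem hxA',
          show s - (A'.card - 1) = (s - A'.card) + 1 by omega, pow_succ]
        ring
      have hsum1 : ∑ P ∈ F, 2 ^ (s - P.card) =
          2 ^ (s - A'.card) + ∑ P ∈ F.erase A', 2 ^ (s - P.card) :=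
        (Finset.add_sum_erase F _ hA').symm
      have hsum2 : ∑ P ∈ F.erase A', 2 ^ (s - P.card) =
          2 ^ (s - B'.card) + ∑ P ∈ (F.erase A').erase B', 2 ^ (s - P.card) :=
        (Finset.add_sum_erase _ _ hBA).symm
      have hAB2 : (2:ℕ) ^ (s - A'.card) = 2 ^ (s - B'.card) := by rw [hcAB']
      omega
    · -- edges
      intro P hP
      rcases Finset.mem_insert.mp hP with rfl | hP
      · obtain ⟨e, he, hew⟩ := hedge A' hA'
        refine ⟨e, he, fun a ha => ?_⟩
        rcases Finset.mem_union.mp (hew ha) with hW | hA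
        · exact Finset.mem_union_left _ (Finset.mem_insert_of_mem hW)
        · by_cases hax : a = x'
          · exact Finset.mem_union_left _ (hax ▸ Finset.mem_insert_self _ _)
          · exact Finset.mem_union_right _ (Finset.mem_erase.mpr ⟨hax, hA⟩)
      · obtain ⟨e, he, hew⟩ := hedge P (hmemfacts P hP).1
        refine ⟨e, he, fun a ha => ?_⟩
        rcases Finset.mem_union.mp (hew ha) with hW | hPa
        · exact Finset.mem_union_left _ (Finset.mem_insert_of_mem hW)
        · exact Finset.mem_union_right _ hPa
  rw [WCWaiterWins, dif_pos (show 2 ≤ U.card from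
    Finset.one_lt_card.mpr ⟨x, hxU, y, hyU, hxy⟩)]
  refine ⟨x, hxU, y, hyU, hxy, key A B x y hA hB hAB hcAB hxA hyB hxU, ?_⟩
  have h2 := key B A y x hB hA hAB.symm hcAB.symm hyB hxA hyU
  rwa [show ({y, x} : Finset α) = {x, y} from Finset.pair_comm y x] at h2
termination_by U.card
decreasing_by all_goals exact card_sdiff_pair_lt (by assumption)

/-- Direction ←: from a Waiter win on the trace, a Waiter win on the full game. -/
lemma wc_win_of_trace (k : ℕ) (V : Finset α) (E : Set (Finset α))
    (hEV : ∀ e ∈ E, e ⊆ V) (hunif : ∀ e ∈ E, e.card = k) (K : Finset α)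
    (hker : ∀ e ∈ E, ∃ C, C ⊆ e ∩ K ∧ IsCenterOutside E (2 ^ k) K C)
    (U' W' U W : Finset α)
    (h : WCWaiterWins {f | ∃ e ∈ E, f = e ∩ K} U' W')
    (hUK : U' ⊆ K) (hUU : U' ⊆ U) (hWW : W' ⊆ W) (hVK : V \ K ⊆ U) :
    WCWaiterWins E U W := by
  rw [WCWaiterWins] at h
  split_ifs at h with h2
  · obtain ⟨x, hx, y, hy, hxy, hwx, hwy⟩ := h
    have hxU : x ∈ U := hUU hx
    have hyU : y ∈ U := hUU hy
    rw [WCWaiterWins, dif_pos (show 2 ≤ U.card from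
      Finset.one_lt_card.mpr ⟨x, hxU, y, hyU, hxy⟩)]
    have hUK' : U' \ {x, y} ⊆ K := Finset.sdiff_subset.trans hUK
    have hUU' : U' \ {x, y} ⊆ U \ {x, y} :=
      Finset.sdiff_subset_sdiff hUU subset_rfl
    have hVK' : V \ K ⊆ U \ {x, y} := by
      intro a ha
      have haK : a ∉ K := (Finset.mem_sdiff.mp ha).2
      rw [Finset.mem_sdiff]
      refine ⟨hVK ha, ?_⟩
      simp only [Finset.mem_insert, Finset.mem_singleton]
      push_neg
      exact ⟨fun h => haK (h ▸ hUK hx), fun h => haK (h ▸ hUK hy)⟩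
    exact ⟨x, hxU, y, hyU, hxy,
      wc_win_of_trace k V E hEV hunif K hker _ _ _ _ hwx hUK' hUU'
        (Finset.insert_subset_insert _ hWW) hVK',
      wc_win_of_trace k V E hEV hunif K hker _ _ _ _ hwy hUK' hUU'
        (Finset.insert_subset_insert _ hWW) hVK'⟩
  · obtain ⟨f, hf, hfW⟩ := h
    obtain ⟨e, he, rfl⟩ := hf
    obtain ⟨C, hCeK, S, ⟨⟨hSE, hCS, hSS⟩, hout⟩⟩ := hker e he
    have hCW : C ⊆ W := hCeK.trans (hfW.trans hWW)
    by_cases hpet : ∃ i, S i \ C = ∅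
    · obtain ⟨i, hi⟩ := hpet
      refine wc_win_of_done E U W ⟨S i, hSE i, fun a ha => ?_⟩
      by_cases haC : a ∈ C
      · exact hCW haC
      · exact absurd (Finset.mem_sdiff.mpr ⟨ha, haC⟩) (by simp [hi])
    · push_neg at hpet
      have hpetcard : ∀ i, (S i \ C).card = k - C.card := fun i => by
        rw [Finset.card_sdiff_of_subset (hCS i), hunif (S i) (hSE i)]
      have hpetdisj : ∀ i j, i ≠ j → Disjoint (S i \ C) (S j \ C) := by
        intro i j hij
        rw [Finset.disjoint_left]
        intro a ha haj
        have h1 : a ∈ S i ∩ S j :=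
          Finset.mem_inter.mpr ⟨(Finset.mem_sdiff.mp ha).1, (Finset.mem_sdiff.mp haj).1⟩
        rw [hSS i j hij] at h1
        exact (Finset.mem_sdiff.mp ha).2 h1
      have hpetinj : Function.Injective (fun i => S i \ C) := by
        intro i j hij
        by_contra hne
        have hd := hpetdisj i j hne
        have hij' : S i \ C = S j \ C := hij
        rw [hij'] at hd
        exact (hpet j).ne_empty ((Finset.disjoint_self_iff_empty _).mp hd)
      refine wc_win_boxes E (k - C.card) U W
        (Finset.image (fun i => S i \ C) Finset.univ) ?_ ?_ ?_ ?_ ?_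
      · intro P hP
        obtain ⟨i, _, rfl⟩ := Finset.mem_image.mp hP
        intro a ha
        have haV : a ∈ V := hEV (S i) (hSE i) (Finset.mem_sdiff.mp ha).1
        have haK : a ∉ K := Finset.disjoint_left.mp (hout i) ha
        exact hVK (Finset.mem_sdiff.mpr ⟨haV, haK⟩)
      · intro P hP Q hQ hPQ
        obtain ⟨i, _, rfl⟩ := Finset.mem_image.mp hP
        obtain ⟨j, _, rfl⟩ := Finset.mem_image.mp hQ
        exact hpetdisj i j (fun h => hPQ (h ▸ rfl))
      · intro P hP
        obtain ⟨i, _, rfl⟩ := Finset.mem_image.mp hP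
        exact le_of_eq (hpetcard i)
      · have hcardim : (Finset.image (fun i => S i \ C) Finset.univ).card = 2 ^ k := by
          rw [Finset.card_image_of_injective _ hpetinj, Finset.card_univ, Fintype.card_fin]
        have hterm : ∀ P ∈ Finset.image (fun i => S i \ C) Finset.univ,
            2 ^ (k - C.card - P.card) = 1 := by
          intro P hP
          obtain ⟨i, _, rfl⟩ := Finset.mem_image.mp hP
          rw [hpetcard i, Nat.sub_self, pow_zero]
        rw [Finset.sum_congr rfl hterm, Finset.sum_const, smul_eq_mul, mul_one, hcardim]
        exact Nat.pow_le_pow_right (by norm_num) (Nat.sub_le _ _)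
      · intro P hP
        obtain ⟨i, _, rfl⟩ := Finset.mem_image.mp hP
        refine ⟨S i, hSE i, fun a ha => ?_⟩
        by_cases haC : a ∈ C
        · exact Finset.mem_union_left _ (hCW haC)
        · exact Finset.mem_union_right _ (Finset.mem_sdiff.mpr ⟨ha, haC⟩)
termination_by U'.card
decreasing_by all_goals exact card_sdiff_pair_lt (by assumption)


/-- If `K` is a `2^k`-kernel of the `k`-uniform hypergraph `H = (V, E)`, then Waiter has a
winning strategy in the Waiter-Client game on `H` if and only if she has one on the trace
hypergraph `T_K(H) = (K, {e ∩ K : e ∈ E})`. -/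
theorem wc_waiter_iff_trace_on_kernel (k : ℕ) (V : Finset α) (E : Set (Finset α))
    (hEV : ∀ e ∈ E, e ⊆ V) (hunif : ∀ e ∈ E, e.card = k)
    (K : Finset α) (hK : IsKernel V E (2 ^ k) K) :
    WCWaiterWins E V ∅ ↔ WCWaiterWins {f | ∃ e ∈ E, f = e ∩ K} K ∅ := by
  constructor
  · intro h
    exact wc_trace_of_win E K V ∅ K ∅ h Finset.inter_subset_right (by simp)
  · intro h
    exact wc_win_of_trace k V E hEV hunif K hK.2 K ∅ V ∅ h subset_rfl hK.1
      (by simp) Finset.sdiff_subset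
end
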